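/- Pauli twirl of a single-qubit channel yields a Pauli channel: for every finite family (E_k) of 2×2 complex matrices and every 2×2 complex matrix ρ, (1/4) Σ_{l=0}^{3} P_l (Σ_k E_k (P_l ρ P_l) E_k†) P_l = Σ_{l=0}^{3} χ_l P_l ρ P_l, where χ_l = Σ_k |Tr(E_k P_l)|² / 4. -/

import Mathlib

open Matrix

noncomputable section

/-- The Pauli matrices `P₀ = I`, `P₁ = X`, `P₂ = Y`, `P₃ = Z`. -/
def Pauli : Fin 4 → Matrix (Fin 2) (Fin 2) ℂ :=
  ![!![1, 0; 0, 1],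
    !![0, 1; 1, 0],
    !![0, -Complex.I; Complex.I, 0],
    !![1, 0; 0, -1]]

lemma norm_sq_cast (z : ℂ) : ((‖z‖ : ℂ))^2 = z * (starRingEnd ℂ) z := by
  rw [← Complex.ofReal_pow, Complex.sq_norm, Complex.mul_conj]

set_option maxHeartbeats 1600000 in
lemma key (A ρ : Matrix (Fin 2) (Fin 2) ℂ) :
    ((1 : ℂ) / 4) • ∑ l : Fin 4,
        Pauli l * (A * (Pauli l * ρ * Pauli l) * Aᴴ) * Pauli l =
      ∑ l : Fin 4,
        (((‖(A * Pauli l).trace‖ : ℂ) ^ 2) / 4) • (Pauli l * ρ * Pauli l) := by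
  have hA : A = !![A 0 0, A 0 1; A 1 0, A 1 1] := by
    ext i j; fin_cases i <;> fin_cases j <;> rfl
  have hρ : ρ = !![ρ 0 0, ρ 0 1; ρ 1 0, ρ 1 1] := by
    ext i j; fin_cases i <;> fin_cases j <;> rfl
  rw [hA, hρ]
  generalize A 0 0 = a; generalize A 0 1 = b; generalize A 1 0 = c; generalize A 1 1 = d
  generalize ρ 0 0 = p; generalize ρ 0 1 = q; generalize ρ 1 0 = r; generalize ρ 1 1 = s
  simp only [norm_sq_cast]
  ext i j
  fin_cases i <;> fin_cases j <;>
    simp [Pauli, Matrix.mul_apply, Matrix.trace, Matrix.diag, Fin.sum_univ_succ,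
      Matrix.smul_apply, Matrix.sum_apply,
      conjTranspose_apply, map_add, _root_.map_mul, map_neg, Complex.conj_I,
      Matrix.vecMul, dotProduct, Matrix.vecHead, Matrix.vecTail, Pi.smul_apply,
      smul_eq_mul, Complex.I_sq, Complex.I_pow_four] <;>
    ring_nf <;> simp only [Complex.I_pow_four] <;> ring

/-- **The Pauli twirl of a single-qubit channel is a Pauli channel**: for every finite family
`(E_k)` of 2×2 complex Kraus operators and every 2×2 complex matrix `ρ`,
`(1/4) Σ_l P_l (Σ_k E_k (P_l ρ P_l) E_k†) P_l = Σ_l χ_l P_l ρ P_l`, where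
`χ_l = Σ_k |Tr(E_k P_l)|² / 4`. -/
theorem pauli_twirl_is_pauli_channel {ι : Type*} [Fintype ι]
    (E : ι → Matrix (Fin 2) (Fin 2) ℂ) (ρ : Matrix (Fin 2) (Fin 2) ℂ) :
    ((1 : ℂ) / 4) • ∑ l : Fin 4,
        Pauli l * (∑ k, E k * (Pauli l * ρ * Pauli l) * (E k)ᴴ) * Pauli l =
      ∑ l : Fin 4,
        ((∑ k, (‖(E k * Pauli l).trace‖ : ℂ) ^ 2) / 4) • (Pauli l * ρ * Pauli l) := by
  calc ((1 : ℂ) / 4) • ∑ l : Fin 4,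
        Pauli l * (∑ k, E k * (Pauli l * ρ * Pauli l) * (E k)ᴴ) * Pauli l
      = ∑ k, ((1 : ℂ) / 4) • ∑ l : Fin 4,
          Pauli l * (E k * (Pauli l * ρ * Pauli l) * (E k)ᴴ) * Pauli l := by
        simp only [Finset.mul_sum, Finset.sum_mul, Finset.smul_sum]
        rw [Finset.sum_comm]
    _ = ∑ k, ∑ l : Fin 4,
          (((‖(E k * Pauli l).trace‖ : ℂ) ^ 2) / 4) • (Pauli l * ρ * Pauli l) :=
        Finset.sum_congr rfl fun k _ => key (E k) ρ
    _ = ∑ l : Fin 4,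
          ((∑ k, (‖(E k * Pauli l).trace‖ : ℂ) ^ 2) / 4) • (Pauli l * ρ * Pauli l) := by
        rw [Finset.sum_comm]
        exact Finset.sum_congr rfl fun l _ => by rw [Finset.sum_div, Finset.sum_smul]

end
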